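/- Let β be a positive integer such that 2β + 1 is composite, let l be a prime dividing 2β + 1, and let q be an odd prime. Then σ(q^{2β}) has at least two distinct prime factors r with r ≡ 1 (mod l). -/

import Mathlib

open Finset

def G (x n : ℕ) : ℕ := ∑ i ∈ range n, x ^ i

lemma G_succ (x n : ℕ) : G x (n+1) = G x n + x ^ n := Finset.sum_range_succ _ _

lemma G_identity {x : ℕ} (hx : 1 ≤ x) (n : ℕ) : (x - 1) * G x n + 1 = x ^ n := by
  obtain ⟨y, rfl⟩ : ∃ y, x = y + 1 := ⟨x - 1, by omega⟩
  simp only [Nat.add_sub_cancel]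
  induction n with
  | zero => simp [G]
  | succ n ih => rw [G_succ, pow_succ]; ring_nf; ring_nf at ih; omega

lemma G_dvd_pow_sub_one {x : ℕ} (hx : 1 ≤ x) (n : ℕ) : G x n ∣ x ^ n - 1 := by
  have h := G_identity hx n
  rw [mul_comm] at h
  exact ⟨x - 1, by omega⟩

lemma G_mul (x a c : ℕ) : G x (a * c) = G x a * G (x ^ a) c := by
  induction c with
  | zero => simp [G]
  | succ c ih =>
      have h1 : a * (c + 1) = a * c + a := by ring
      rw [h1]
      show (∑ i ∈ range (a * c + a), x ^ i) = _
      rw [Finset.sum_range_add]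
      have h2 : ∑ i ∈ range a, x ^ (a * c + i) = (x ^ a) ^ c * G x a := by
        unfold G
        rw [Finset.mul_sum]
        refine Finset.sum_congr rfl fun i _ => ?_
        rw [← pow_mul, ← pow_add]
      have h3 : (∑ i ∈ range (a*c), x ^ i) = G x (a*c) := rfl
      rw [h2, h3, ih, G_succ]; ring

lemma G_pos {x n : ℕ} (hx : 1 ≤ x) (hn : 0 < n) : 0 < G x n := by
  have : x ^ 0 ≤ G x n :=
    Finset.single_le_sum (fun i _ => Nat.zero_le _) (Finset.mem_range.mpr hn)
  exact lt_of_lt_of_le (by norm_num) this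

lemma pow_eq_one_of_dvd_G {r x l : ℕ} [NeZero r] (hx : 1 ≤ x) (h : r ∣ G x l) :
    (x : ZMod r) ^ l = 1 := by
  have hid := G_identity hx l
  have h0 : ((G x l : ℕ) : ZMod r) = 0 := (ZMod.natCast_eq_zero_iff _ _).mpr h
  calc (x : ZMod r) ^ l = ((x ^ l : ℕ) : ZMod r) := by push_cast; ring
    _ = (((x - 1) * G x l + 1 : ℕ) : ZMod r) := by rw [hid]
    _ = 1 := by push_cast; rw [h0]; ring

lemma dvd_pow_sub_one_of_pow_eq_one {r x n : ℕ} [NeZero r] (hx : 1 ≤ x)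
    (h : (x : ZMod r) ^ n = 1) : r ∣ x ^ n - 1 := by
  have h1 : ((x ^ n - 1 : ℕ) : ZMod r) = 0 := by
    rw [Nat.cast_sub (Nat.one_le_pow _ _ hx)]
    push_cast
    rw [h]; ring
  exact (ZMod.natCast_eq_zero_iff _ _).mp h1

lemma G_prime_factor {r l x : ℕ} (hr : r.Prime) (hl : l.Prime) (hx : 1 ≤ x)
    (h : r ∣ G x l) :
    r = l ∨ (orderOf (x : ZMod r) = l ∧ r ≡ 1 [MOD l]) := by
  haveI : Fact r.Prime := ⟨hr⟩
  have hpow : (x : ZMod r) ^ l = 1 := pow_eq_one_of_dvd_G hx h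
  have hd : orderOf (x : ZMod r) ∣ l := orderOf_dvd_of_pow_eq_one hpow
  rcases hl.eq_one_or_self_of_dvd _ hd with h1 | hll
  · left
    have hx1 : (x : ZMod r) = 1 := orderOf_eq_one_iff.mp h1
    have hGl : ((G x l : ℕ) : ZMod r) = (l : ZMod r) := by
      unfold G; push_cast; simp [hx1]
    have hrl : r ∣ l := by
      rw [← ZMod.natCast_eq_zero_iff, ← hGl]
      exact (ZMod.natCast_eq_zero_iff _ _).mpr h
    exact (Nat.prime_dvd_prime_iff_eq hr hl).mp hrl
  · right
    refine ⟨hll, ?_⟩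
    have hx0 : (x : ZMod r) ≠ 0 := by
      intro h0
      rw [h0, zero_pow hl.ne_zero] at hpow
      exact zero_ne_one hpow
    have hfermat := ZMod.pow_card_sub_one_eq_one hx0
    have hdvd : l ∣ r - 1 := hll ▸ orderOf_dvd_of_pow_eq_one hfermat
    exact ((Nat.modEq_iff_dvd' hr.one_lt.le).mpr hdvd).symm

lemma val_G_eq_one {l x : ℕ} (hl : l.Prime) (hlodd : Odd l) (hx : 2 ≤ x)
    (h : l ∣ G x l) : padicValNat l (G x l) = 1 := by
  haveI : Fact l.Prime := ⟨hl⟩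
  have hpow : (x : ZMod l) ^ l = 1 := pow_eq_one_of_dvd_G (by omega) h
  have hd : orderOf (x : ZMod l) ∣ l := orderOf_dvd_of_pow_eq_one hpow
  have hx0 : (x : ZMod l) ≠ 0 := by
    intro h0
    rw [h0, zero_pow hl.ne_zero] at hpow
    exact zero_ne_one hpow
  have hd' : orderOf (x : ZMod l) ∣ l - 1 :=
    orderOf_dvd_of_pow_eq_one (ZMod.pow_card_sub_one_eq_one hx0)
  have h1 : orderOf (x : ZMod l) = 1 := by
    rcases hl.eq_one_or_self_of_dvd _ hd with h1 | h2
    · exact h1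
    · exfalso
      rw [h2] at hd'
      have h3 := Nat.le_of_dvd (by have := hl.one_lt; omega) hd'
      have := hl.one_lt
      omega
  have hx1 : (x : ZMod l) = 1 := orderOf_eq_one_iff.mp h1
  have hlx1 : l ∣ x - 1 := by
    have hc : ((x - 1 : ℕ) : ZMod l) = 0 := by
      rw [Nat.cast_sub (by omega)]
      simp [hx1]
    exact (ZMod.natCast_eq_zero_iff _ _).mp hc
  have hlnx : ¬ l ∣ x := by
    intro hdx
    have h4 : l ∣ x - (x - 1) := Nat.dvd_sub hdx hlx1
    rw [show x - (x - 1) = 1 by omega] at h4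
    exact hl.one_lt.ne' (Nat.dvd_one.mp h4)
  have hlte := padicValNat.pow_sub_pow (p := l) (x := x) (y := 1) hlodd (by omega)
    (by simpa using hlx1) hlnx (n := l) hl.ne_zero
  have hxl1 : x ^ l - 1 = (x - 1) * G x l := by
    have hid := G_identity (show 1 ≤ x by omega) l
    omega
  rw [one_pow, hxl1, padicValNat.mul (by omega) (G_pos (by omega) hl.pos).ne',
    padicValNat_self] at hlte
  omega

lemma G_gt {x l : ℕ} (hx : 2 ≤ x) (hl : 2 ≤ l) : l < G x l := by
  obtain ⟨k, rfl⟩ : ∃ k, l = k + 2 := ⟨l - 2, by omega⟩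
  have h1 : k + 1 ≤ G x (k+1) := by
    have : ∑ i ∈ range (k+1), 1 ≤ ∑ i ∈ range (k+1), x ^ i :=
      Finset.sum_le_sum fun i _ => Nat.one_le_pow _ _ (by omega)
    simpa [G] using this
  have h2 : 2 ^ (k+1) ≤ x ^ (k+1) := Nat.pow_le_pow_left hx _
  have h3 : k + 2 ≤ 2 ^ (k+1) := by
    have := Nat.lt_two_pow_self (n := k+1)
    omega
  rw [G_succ]
  omega

lemma exists_prime_factor_ne {l x : ℕ} (hl : l.Prime) (hlodd : Odd l) (hx : 2 ≤ x) :
    ∃ r, r.Prime ∧ r ∣ G x l ∧ r ≠ l := by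
  have hG0 : G x l ≠ 0 := (G_pos (by omega) hl.pos).ne'
  have hgt : l < G x l := G_gt hx hl.two_le
  have hCdvd : ordCompl[l] (G x l) ∣ G x l := Nat.ordCompl_dvd _ _
  by_cases hC1 : ordCompl[l] (G x l) = 1
  · exfalso
    have hself := Nat.ordProj_mul_ordCompl_eq_self (G x l) l
    rw [hC1, mul_one] at hself
    have hv : (G x l).factorization l ≤ 1 := by
      rw [Nat.factorization_def _ hl]
      by_cases hdv : l ∣ G x l
      · exact (val_G_eq_one hl hlodd hx hdv).le
      · rw [padicValNat.eq_zero_of_not_dvd hdv]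
        omega
    have hle : G x l ≤ l ^ 1 := by
      conv_lhs => rw [← hself]
      exact Nat.pow_le_pow_right hl.pos hv
    simp only [pow_one] at hle
    omega
  · obtain ⟨r, hr, hrC⟩ := Nat.exists_prime_and_dvd hC1
    exact ⟨r, hr, hrC.trans hCdvd, fun h => Nat.not_dvd_ordCompl hl hG0 (h ▸ hrC)⟩

lemma three_mul_le_pow {a : ℕ} (ha : 2 ≤ a) : 3 * (a + 1) ≤ 3 ^ a := by
  induction a with
  | zero => omega
  | succ a ih =>
      rcases Nat.lt_or_ge a 2 with h | h
      · interval_cases a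
        · omega
        · norm_num
      · have h1 := ih h
        have h2 : (3:ℕ) ^ (a+1) = 3 * 3 ^ a := by ring
        omega

lemma size_ineq {q l m : ℕ} (hq : 3 ≤ q) (hl : 3 ≤ l) (hm : 3 ≤ m) :
    l * ((q ^ l - 1) * m) < q ^ (m * (l - 1)) := by
  obtain ⟨a, rfl⟩ : ∃ a, l = a + 1 := ⟨l - 1, by omega⟩
  obtain ⟨b, rfl⟩ : ∃ b, m = b + 1 := ⟨m - 1, by omega⟩
  have ha : 2 ≤ a := by omega
  have hb : 2 ≤ b := by omega
  have h1 : 3 * (a+1) ≤ 3 ^ a := three_mul_le_pow ha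
  have h2 : 3 * (b+1) ≤ 3 ^ b := three_mul_le_pow hb
  have hab : a + b ≤ a * b := Nat.add_le_mul ha hb
  have h3 : 9 * ((a+1) * (b+1)) ≤ 3 ^ (a + b) := by
    rw [pow_add]
    calc 9 * ((a+1)*(b+1)) = (3*(a+1)) * (3*(b+1)) := by ring
      _ ≤ 3 ^ a * 3 ^ b := Nat.mul_le_mul h1 h2
  have h4 : (3:ℕ) ^ (a+b) ≤ 3 ^ (a*b) := Nat.pow_le_pow_right (by norm_num) hab
  have hab4 : 4 ≤ a * b := le_trans (by norm_num) (Nat.mul_le_mul ha hb)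
  have h5 : (3:ℕ) ^ (a*b) = 3 * 3 ^ (a*b - 1) := by
    rw [← pow_succ']
    congr 1
    omega
  have h6 : (a+1)*(b+1) ≤ 3 ^ (a*b - 1) := by omega
  have h7 : (3:ℕ) ^ (a*b - 1) ≤ q ^ (a*b - 1) := Nat.pow_le_pow_left hq _
  have hq1 : 1 ≤ q ^ (a+1) := Nat.one_le_pow _ _ (by omega)
  have h8 : (a+1) * ((q^(a+1) - 1) * (b+1)) < ((a+1)*(b+1)) * q^(a+1) := by
    have hlt : q ^ (a+1) - 1 < q ^ (a+1) := by omega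
    calc (a+1) * ((q^(a+1) - 1) * (b+1)) = ((a+1)*(b+1)) * (q^(a+1) - 1) := by ring
      _ < ((a+1)*(b+1)) * q^(a+1) := by
          exact Nat.mul_lt_mul_of_le_of_lt (le_refl _) hlt (by positivity)
  have h9 : ((a+1)*(b+1)) * q^(a+1) ≤ q^(a*b-1) * q^(a+1) :=
    Nat.mul_le_mul_right _ (le_trans h6 h7)
  have h10 : q^(a*b-1) * q^(a+1) = q^((b+1) * ((a+1) - 1)) := by
    rw [← pow_add]
    congr 1
    have hx : (b+1) * a = a*b + a := by ring
    simp only [Nat.add_sub_cancel]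
    omega
  calc (a+1) * ((q^(a+1) - 1) * (b+1)) < ((a+1)*(b+1)) * q^(a+1) := h8
    _ ≤ q^(a*b-1) * q^(a+1) := h9
    _ = q^((b+1)*((a+1) - 1)) := h10

theorem sigma_has_two_prime_factors_cong_one
    (β l q : ℕ) (hβ : 0 < β)
    (hcomp : 1 < 2 * β + 1 ∧ ¬ (2 * β + 1).Prime)
    (hl : l.Prime) (hdvd : l ∣ 2 * β + 1)
    (hq : q.Prime) (hqodd : Odd q) :
    ∃ r₁ r₂ : ℕ, r₁.Prime ∧ r₂.Prime ∧ r₁ ≠ r₂ ∧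
      r₁ ∣ (ArithmeticFunction.sigma 1) (q ^ (2 * β)) ∧
      r₂ ∣ (ArithmeticFunction.sigma 1) (q ^ (2 * β)) ∧
      r₁ ≡ 1 [MOD l] ∧ r₂ ≡ 1 [MOD l] := by
  -- basic facts
  have hq3 : 3 ≤ q := by
    have h2 := hq.two_le
    rcases hqodd with ⟨k, hk⟩
    omega
  have hσ : (ArithmeticFunction.sigma 1) (q ^ (2 * β)) = G q (2 * β + 1) := by
    rw [ArithmeticFunction.sigma_one_apply_prime_pow hq]
    rfl
  have hnodd : Odd (2 * β + 1) := ⟨β, by ring⟩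
  have hlodd : Odd l := by
    rcases Nat.even_or_odd l with he | ho
    · exfalso
      have h2 : (2 : ℕ) ∣ 2 * β + 1 := dvd_trans he.two_dvd hdvd
      omega
    · exact ho
  have hl3 : 3 ≤ l := by
    have := hl.two_le
    rcases hlodd with ⟨k, hk⟩
    omega
  -- the cofactor m
  obtain ⟨m, hm⟩ : ∃ m, 2 * β + 1 = l * m := hdvd
  have hm0 : m ≠ 0 := by rintro rfl; omega
  have hm1 : m ≠ 1 := by
    rintro rfl
    rw [mul_one] at hm
    exact hcomp.2 (hm ▸ hl)
  have hmodd : Odd m := by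
    rcases Nat.even_or_odd m with he | ho
    · exfalso
      have h2 : (2 : ℕ) ∣ 2 * β + 1 := hm ▸ Dvd.dvd.mul_left he.two_dvd l
      omega
    · exact ho
  have hm3 : 3 ≤ m := by
    rcases hmodd with ⟨k, hk⟩
    omega
  -- divisibility of the two geometric sums into σ
  have hN₁σ : G q l ∣ G q (2 * β + 1) := by
    rw [hm, G_mul]
    exact Dvd.intro _ rfl
  have hN₂σ : G (q ^ m) l ∣ G q (2 * β + 1) := by
    rw [hm, mul_comm l m, G_mul]
    exact Dvd.intro_left _ rfl
  -- pick r₁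
  obtain ⟨r₁, hr₁, hr₁N, hr₁l⟩ := exists_prime_factor_ne hl hlodd (x := q) (by omega)
  haveI : Fact r₁.Prime := ⟨hr₁⟩
  have hord : orderOf (q : ZMod r₁) = l ∧ r₁ ≡ 1 [MOD l] := by
    rcases G_prime_factor hr₁ hl (by omega) hr₁N with h | h
    · exact absurd h hr₁l
    · exact h
  obtain ⟨hordl, hmod₁⟩ := hord
  have hqm1 : 1 ≤ q ^ m := Nat.one_le_pow _ _ (by omega)
  by_cases hex : ∃ r, r.Prime ∧ r ∣ G (q ^ m) l ∧ r ≠ l ∧ r ≠ r₁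
  · obtain ⟨r₂, hr₂, hr₂N, hr₂l, hr₂r₁⟩ := hex
    have hmod₂ : r₂ ≡ 1 [MOD l] := by
      rcases G_prime_factor hr₂ hl hqm1 hr₂N with h | h
      · exact absurd h hr₂l
      · exact h.2
    exact ⟨r₁, r₂, hr₁, hr₂, fun h => hr₂r₁ h.symm,
      hσ ▸ hr₁N.trans hN₁σ, hσ ▸ hr₂N.trans hN₂σ, hmod₁, hmod₂⟩
  · exfalso
    push_neg at hex
    -- all prime factors of N₂ are l or r₁
    set N₂ := G (q ^ m) l with hN₂def
    have hN₂0 : N₂ ≠ 0 := (G_pos hqm1 hl.pos).ne'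
    have hOC0 : ordCompl[l] N₂ ≠ 0 := (Nat.ordCompl_pos l hN₂0).ne'
    have hC1 : ordCompl[r₁] (ordCompl[l] N₂) = 1 := by
      by_contra hC
      obtain ⟨p, hp, hpC⟩ := Nat.exists_prime_and_dvd hC
      have hp2 : p ∣ ordCompl[l] N₂ := hpC.trans (Nat.ordCompl_dvd _ _)
      have hpN : p ∣ N₂ := hp2.trans (Nat.ordCompl_dvd _ _)
      have hpl : p ≠ l := fun h => Nat.not_dvd_ordCompl hl hN₂0 (h ▸ hp2)
      have hpr : p = r₁ := hex p hp hpN hpl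
      exact Nat.not_dvd_ordCompl hr₁ hOC0 (hpr ▸ hpC)
    have hkey : N₂ = l ^ (N₂.factorization l) * r₁ ^ ((ordCompl[l] N₂).factorization r₁) := by
      conv_lhs => rw [← Nat.ordProj_mul_ordCompl_eq_self N₂ l]
      congr 1
      conv_lhs => rw [← Nat.ordProj_mul_ordCompl_eq_self (ordCompl[l] N₂) r₁]
      rw [hC1, mul_one]
    -- exponent of l is at most 1
    have ha1 : N₂.factorization l ≤ 1 := by
      rw [Nat.factorization_def _ hl]
      by_cases hdv : l ∣ N₂
      · exact (val_G_eq_one hl hlodd (by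
          have : 3 ≤ q ^ m := le_trans hq3 (Nat.le_self_pow hm0 q)
          omega) hdv).le
      · rw [padicValNat.eq_zero_of_not_dvd hdv]
        omega
    -- exponent of r₁
    have hbval : (ordCompl[l] N₂).factorization r₁ = padicValNat r₁ N₂ := by
      rw [Nat.factorization_ordCompl, Finsupp.erase_ne hr₁l, Nat.factorization_def _ hr₁]
    -- r₁ divides q^l - 1 and is odd
    have hql3 : 3 ≤ q ^ l := le_trans hq3 (Nat.le_self_pow hl.ne_zero q)
    have hpow1 : (q : ZMod r₁) ^ l = 1 := by
      rw [← hordl]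
      exact pow_orderOf_eq_one _
    have hr₁_ql : r₁ ∣ q ^ l - 1 := dvd_pow_sub_one_of_pow_eq_one (by omega) hpow1
    have hldvd1 : l ∣ r₁ - 1 := (Nat.modEq_iff_dvd' hr₁.one_lt.le).mp hmod₁.symm
    have hr₁ne2 : r₁ ≠ 2 := by
      rintro rfl
      have := Nat.le_of_dvd (by omega) hldvd1
      omega
    have hr₁odd : Odd r₁ := hr₁.odd_of_ne_two hr₁ne2
    have hnr₁q : ¬ r₁ ∣ q ^ l := by
      intro hdx
      have h4 : r₁ ∣ q ^ l - (q ^ l - 1) := Nat.dvd_sub hdx hr₁_ql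
      rw [show q ^ l - (q ^ l - 1) = 1 by omega] at h4
      exact hr₁.one_lt.ne' (Nat.dvd_one.mp h4)
    have hlte : padicValNat r₁ ((q ^ l) ^ m - 1 ^ m)
        = padicValNat r₁ (q ^ l - 1) + padicValNat r₁ m :=
      padicValNat.pow_sub_pow (p := r₁) (x := q ^ l) (y := 1) hr₁odd (by omega)
        (by simpa using hr₁_ql) hnr₁q hm0
    rw [one_pow] at hlte
    have hX3 : 3 ≤ (q ^ l) ^ m := le_trans hql3 (Nat.le_self_pow hm0 _)
    have hdvd2 : N₂ ∣ (q ^ l) ^ m - 1 := by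
      have h5 : N₂ ∣ (q ^ m) ^ l - 1 := G_dvd_pow_sub_one hqm1 l
      rwa [← pow_mul, mul_comm m l, pow_mul] at h5
    have hb_le : padicValNat r₁ N₂ ≤ padicValNat r₁ ((q ^ l) ^ m - 1) := by
      rw [← padicValNat_dvd_iff_le (by omega)]
      exact dvd_trans pow_padicValNat_dvd hdvd2
    have hv1 : r₁ ^ padicValNat r₁ (q ^ l - 1) ≤ q ^ l - 1 :=
      Nat.le_of_dvd (by omega) pow_padicValNat_dvd
    have hv2 : r₁ ^ padicValNat r₁ m ≤ m :=
      Nat.le_of_dvd (by omega) pow_padicValNat_dvd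
    -- upper bound for N₂
    have hupper : N₂ ≤ l * ((q ^ l - 1) * m) := by
      calc N₂ = l ^ N₂.factorization l * r₁ ^ ((ordCompl[l] N₂).factorization r₁) := hkey
        _ ≤ l ^ 1 * r₁ ^ ((ordCompl[l] N₂).factorization r₁) :=
            Nat.mul_le_mul_right _ (Nat.pow_le_pow_right hl.pos ha1)
        _ ≤ l * ((q ^ l - 1) * m) := by
            rw [pow_one]
            refine Nat.mul_le_mul_left _ ?_
            calc r₁ ^ ((ordCompl[l] N₂).factorization r₁)
                ≤ r₁ ^ (padicValNat r₁ (q ^ l - 1) + padicValNat r₁ m) := by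
                  refine Nat.pow_le_pow_right hr₁.pos ?_
                  rw [hbval]
                  omega
              _ = r₁ ^ padicValNat r₁ (q ^ l - 1) * r₁ ^ padicValNat r₁ m := pow_add _ _ _
              _ ≤ (q ^ l - 1) * m := Nat.mul_le_mul hv1 hv2
    -- lower bound for N₂
    have hlower : q ^ (m * (l - 1)) ≤ N₂ := by
      have h6 : (q ^ m) ^ (l - 1) ≤ N₂ := by
        rw [hN₂def]
        exact Finset.single_le_sum (f := fun i => (q ^ m) ^ i) (fun i _ => Nat.zero_le _)
          (Finset.mem_range.mpr (by omega))
      rwa [← pow_mul] at h6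
    have hfinal := size_ineq hq3 hl3 hm3
    omega
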